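/- arXiv:2405.14655 — 6 statements merged into one kernel-verified Lean document; each statement's English description precedes it below -/
import Mathlib

section
/- In a finite-horizon MDP, for any two policies π_1, π_2 and any coefficient c ∈ [0,1], there exists a policy π_c such that for every step h and every state x_h ∈ X_h, the reach probability satisfies ρ^{π_c}(x_h) = c·ρ^{π_1}(x_h) + (1−c)·ρ^{π_2}(x_h). Specifically, the policy defined by π_c(y|x) = (c ρ^{π_1}(x) π_1(y|x) + (1−c) ρ^{π_2}(x) π_2(y|x)) / (c ρ^{π_1}(x) + (1−c) ρ^{π_2}(x)) (whenever the denominator is positive) satisfies this property. -/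
open Finset

variable {X Y : Type} [Fintype X] [Fintype Y] [DecidableEq X]

/-- Reach probabilities: probability that the trajectory generated by policy `π`
with transitions `p` from initial state `x1` visits a given state at step `h`. -/
noncomputable def reach (p : ℕ → X → Y → X → ℝ) (π : ℕ → X → Y → ℝ) (x1 : X) :
    ℕ → X → ℝ
  | 0, x => if x = x1 then 1 else 0
  | h + 1, x' => ∑ x : X, ∑ y : Y, reach p π x1 h x * (π h x y * p h x y x')

lemma reach_nonneg (p : ℕ → X → Y → X → ℝ) (π : ℕ → X → Y → ℝ) (x1 : X)
    (hp : ∀ h x y x', 0 ≤ p h x y x') (hπ : ∀ h x y, 0 ≤ π h x y) :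
    ∀ h x, 0 ≤ reach p π x1 h x := by
  intro h
  induction h with
  | zero => intro x; simp only [reach]; split <;> norm_num
  | succ h ih =>
    intro x'
    simp only [reach]
    exact Finset.sum_nonneg fun x _ => Finset.sum_nonneg fun y _ =>
      mul_nonneg (ih x) (mul_nonneg (hπ h x y) (hp h x y x'))

/-- **Mixture policy lemma (Lemma A.4).** For any two policies `π₁, π₂` and any
`c ∈ [0,1]`, any policy `πc` satisfying the stated mixture formula (whenever the
denominator is positive) has reach probabilities equal to the convex combination
`c·ρ^{π₁} + (1−c)·ρ^{π₂}` at every step and state. -/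
theorem reach_convex_combination
    (p : ℕ → X → Y → X → ℝ) (π₁ π₂ πc : ℕ → X → Y → ℝ) (x1 : X)
    (c : ℝ) (hc : 0 ≤ c) (hc' : c ≤ 1)
    (hp : ∀ h x y x', 0 ≤ p h x y x')
    (hπ₁ : ∀ h x y, 0 ≤ π₁ h x y)
    (hπ₂ : ∀ h x y, 0 ≤ π₂ h x y)
    (hπc : ∀ h x y,
      0 < c * reach p π₁ x1 h x + (1 - c) * reach p π₂ x1 h x →
        πc h x y =
          (c * reach p π₁ x1 h x * π₁ h x y + (1 - c) * reach p π₂ x1 h x * π₂ h x y) /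
            (c * reach p π₁ x1 h x + (1 - c) * reach p π₂ x1 h x)) :
    ∀ h x, reach p πc x1 h x = c * reach p π₁ x1 h x + (1 - c) * reach p π₂ x1 h x := by
  intro h
  induction h with
  | zero => intro x; simp only [reach]; split <;> ring
  | succ h ih =>
    intro x'
    simp only [reach]
    rw [Finset.mul_sum, Finset.mul_sum, ← Finset.sum_add_distrib]
    refine Finset.sum_congr rfl fun x _ => ?_
    rw [Finset.mul_sum, Finset.mul_sum, ← Finset.sum_add_distrib]
    refine Finset.sum_congr rfl fun y _ => ?_
    rw [ih x]
    set r1 := reach p π₁ x1 h x with hr1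
    set r2 := reach p π₂ x1 h x with hr2
    rcases lt_or_eq_of_le (add_nonneg
      (mul_nonneg hc (reach_nonneg p π₁ x1 hp hπ₁ h x))
      (mul_nonneg (by linarith) (reach_nonneg p π₂ x1 hp hπ₂ h x)) :
      (0:ℝ) ≤ c * r1 + (1 - c) * r2) with hpos | hzero
    · rw [hπc h x y hpos]
      rw [← hr1, ← hr2]
      field_simp
    · have h1 : c * r1 = 0 := by
        have := mul_nonneg hc (reach_nonneg p π₁ x1 hp hπ₁ h x)
        have := mul_nonneg (by linarith : (0:ℝ) ≤ 1 - c) (reach_nonneg p π₂ x1 hp hπ₂ h x)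
        linarith
      have h2 : (1 - c) * r2 = 0 := by linarith
      rw [← hzero, zero_mul, ← mul_assoc c, ← mul_assoc (1 - c), h1, h2]
      ring
end

section
/- Regularized value difference lemma: in a finite-horizon adversarial MDP with terminal reward r^t and regularization coefficient α > 0 relative to reference policy μ, for any two policies π, π': V_α^{π,t}(x_1) − V_α^{π',t}(x_1) = E_{π',p}[ Σ_{h=1}^{H} ( ⟨π(·|x_h) − π'(·|x_h), Q_α^{π,t}(x_h,·)⟩ + α·KL(π'(·|x_h)||μ(·|x_h)) − α·KL(π(·|x_h)||μ(·|x_h)) ) ], where the expectation is over trajectories generated by π' and p, and ⟨·,·⟩ is the inner product over actions. -/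
open Finset

variable {X Y : Type} [Fintype X] [Fintype Y] [DecidableEq X]

/-- Per-state KL divergence between action distributions. -/
noncomputable def klDist {Y : Type} [Fintype Y] (p q : Y → ℝ) : ℝ :=
  ∑ y, p y * Real.log (p y / q y)

/-- Probability of a path of `m` steps starting at state `x` at time `h`. -/
noncomputable def pathProb (p : ℕ → X → Y → X → ℝ) (π : ℕ → X → Y → ℝ)
    (h : ℕ) (x : X) (m : ℕ) (s : Fin (m + 1) → X) (a : Fin m → Y) : ℝ :=
  (if s 0 = x then (1 : ℝ) else 0) *
    ∏ i : Fin m, π (h + i) (s i.castSucc) (a i) * p (h + i) (s i.castSucc) (a i) (s i.succ)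

/-- The regularized value function `V_α^{π,t}(x_h)`: expected terminal reward minus
`α` times the accumulated per-state KL penalties w.r.t. the reference policy `μ`,
conditioned on being at state `x` at step `h`. -/
noncomputable def Vreg (p : ℕ → X → Y → X → ℝ) (π μ : ℕ → X → Y → ℝ) (r : X → ℝ)
    (α : ℝ) (H h : ℕ) (x : X) : ℝ :=
  ∑ s : Fin (H - h + 1) → X, ∑ a : Fin (H - h) → Y,
    pathProb p π h x (H - h) s a *
      (r (s (Fin.last (H - h))) -
        α * ∑ i : Fin (H - h), klDist (π (h + i) (s i.castSucc)) (μ (h + i) (s i.castSucc)))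

/-- The regularized Q-function `Q_α^{π,t}(x_h, y_h)`: as `Vreg` but additionally
conditioning on the first action `y` taken at step `h`. -/
noncomputable def Qreg (p : ℕ → X → Y → X → ℝ) (π μ : ℕ → X → Y → ℝ) (r : X → ℝ)
    (α : ℝ) (H h : ℕ) (x : X) (y : Y) : ℝ :=
  ∑ x' : X, p h x y x' *
    (∑ s : Fin (H - (h + 1) + 1) → X, ∑ a : Fin (H - (h + 1)) → Y,
      pathProb p π (h + 1) x' (H - (h + 1)) s a *
        (r (s (Fin.last (H - (h + 1)))) -
          α * (klDist (π h x) (μ h x) +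
            ∑ i : Fin (H - (h + 1)),
              klDist (π (h + 1 + i) (s i.castSucc)) (μ (h + 1 + i) (s i.castSucc)))))

set_option linter.unusedSectionVars false
set_option linter.unusedVariables false

lemma sum_pi_cons {Z : Type} [Fintype Z] {M : Type} [AddCommMonoid M] {n : ℕ}
    (f : (Fin (n + 1) → Z) → M) :
    ∑ s : Fin (n + 1) → Z, f s = ∑ z : Z, ∑ s' : Fin n → Z, f (Fin.cons z s') := by
  rw [← (Fin.consEquiv (fun _ : Fin (n+1) => Z)).sum_comp f, Fintype.sum_prod_type]
  rfl

set_option linter.unusedSectionVars false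

lemma pathProb_cons (p : ℕ → X → Y → X → ℝ) (σ : ℕ → X → Y → ℝ) (h : ℕ) (x x0 : X)
    (n : ℕ) (s' : Fin (n + 1) → X) (y : Y) (a' : Fin n → Y) :
    pathProb p σ h x (n + 1) (Fin.cons x0 s') (Fin.cons y a') =
      (if x0 = x then (1 : ℝ) else 0) * (σ h x0 y * p h x0 y (s' 0)) *
        pathProb p σ (h + 1) (s' 0) n s' a' := by
  unfold pathProb
  rw [Fin.prod_univ_succ]
  have h1 : ∀ i : Fin n, (Fin.cons x0 s' : Fin (n+2) → X) i.succ.castSucc = s' i.castSucc := by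
    intro i; rw [← Fin.succ_castSucc, Fin.cons_succ]
  have h2 : (Fin.cons x0 s' : Fin (n+2) → X) ((0 : Fin (n+1)).succ) = s' 0 := Fin.cons_succ _ _ _
  simp only [Fin.cons_succ, Fin.cons_zero, Fin.castSucc_zero, Fin.val_zero, Nat.add_zero, h1,
    Fin.val_succ, if_pos rfl, one_mul, h2]
  have h3 : ∀ i : Fin n, h + (↑i + 1) = h + 1 + ↑i := by intro i; omega
  simp only [h3]
  rw [if_true]
  ring

set_option linter.unusedSectionVars false


lemma pathProb_indicator (p : ℕ → X → Y → X → ℝ) (σ : ℕ → X → Y → ℝ) (h : ℕ) (x : X)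
    (n : ℕ) (s : Fin (n + 1) → X) (a : Fin n → Y) :
    pathProb p σ h x n s a = (if s 0 = x then (1 : ℝ) else 0) * pathProb p σ h (s 0) n s a := by
  unfold pathProb
  rw [if_pos rfl]
  ring

/-- One-step decomposition of path expectations. -/
lemma exp_step (p : ℕ → X → Y → X → ℝ) (σ : ℕ → X → Y → ℝ) (h : ℕ) (x : X) (n : ℕ)
    (g : (Fin (n + 2) → X) → (Fin (n + 1) → Y) → ℝ) :
    ∑ s : Fin (n + 2) → X, ∑ a : Fin (n + 1) → Y, pathProb p σ h x (n + 1) s a * g s a =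
      ∑ y : Y, σ h x y * ∑ x' : X, p h x y x' *
        ∑ s' : Fin (n + 1) → X, ∑ a' : Fin n → Y,
          pathProb p σ (h + 1) x' n s' a' * g (Fin.cons x s') (Fin.cons y a') := by
  rw [sum_pi_cons (fun s => ∑ a : Fin (n+1) → Y, pathProb p σ h x (n + 1) s a * g s a)]
  have step1 : ∀ (x0 : X) (s' : Fin (n+1) → X),
      (∑ a : Fin (n+1) → Y, pathProb p σ h x (n+1) (Fin.cons x0 s') a *
          g (Fin.cons x0 s') a) =
      ∑ y : Y, ∑ a' : Fin n → Y,
        (if x0 = x then (1:ℝ) else 0) * (σ h x0 y * p h x0 y (s' 0)) *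
          pathProb p σ (h + 1) (s' 0) n s' a' * g (Fin.cons x0 s') (Fin.cons y a') := by
    intro x0 s'
    rw [sum_pi_cons (fun a => pathProb p σ h x (n+1) (Fin.cons x0 s') a *
        g (Fin.cons x0 s') a)]
    refine Finset.sum_congr rfl fun y _ => Finset.sum_congr rfl fun a' _ => ?_
    rw [pathProb_cons]
  simp only [step1]
  rw [Finset.sum_eq_single x]
  rotate_left
  · intro b _ hb
    simp [if_neg hb]
  · intro hx; exact absurd (Finset.mem_univ x) hx
  simp only [if_pos rfl, one_mul]
  rw [Finset.sum_comm]
  refine Finset.sum_congr rfl fun y _ => ?_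
  have key : ∀ x' : X, (∑ s' : Fin (n+1) → X, ∑ a' : Fin n → Y,
      pathProb p σ (h+1) x' n s' a' * g (Fin.cons x s') (Fin.cons y a')) =
      ∑ s' : Fin (n+1) → X, (if s' 0 = x' then (1:ℝ) else 0) *
        ∑ a' : Fin n → Y, pathProb p σ (h+1) (s' 0) n s' a' *
          g (Fin.cons x s') (Fin.cons y a') := by
    intro x'
    refine Finset.sum_congr rfl fun s' _ => ?_
    rw [Finset.mul_sum]
    refine Finset.sum_congr rfl fun a' _ => ?_
    rw [pathProb_indicator p σ (h+1) x' n s' a']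
    ring
  simp only [key]
  have key2 : (∑ x' : X, p h x y x' * ∑ s' : Fin (n+1) → X,
      (if s' 0 = x' then (1:ℝ) else 0) *
        ∑ a' : Fin n → Y, pathProb p σ (h+1) (s' 0) n s' a' *
          g (Fin.cons x s') (Fin.cons y a')) =
      ∑ s' : Fin (n+1) → X, p h x y (s' 0) *
        ∑ a' : Fin n → Y, pathProb p σ (h+1) (s' 0) n s' a' *
          g (Fin.cons x s') (Fin.cons y a') := by
    simp only [Finset.mul_sum]
    rw [Finset.sum_comm]
    refine Finset.sum_congr rfl fun s' _ => ?_
    simp [mul_ite, mul_zero, ite_mul, zero_mul, mul_assoc]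
  rw [key2]
  simp only [Finset.mul_sum]
  refine Finset.sum_congr rfl fun s' _ => Finset.sum_congr rfl fun a' _ => ?_
  rw [if_true]
  ring

noncomputable def Vaux (p : ℕ → X → Y → X → ℝ) (σ μ : ℕ → X → Y → ℝ) (r : X → ℝ)
    (α : ℝ) (h n : ℕ) (x : X) : ℝ :=
  ∑ s : Fin (n + 1) → X, ∑ a : Fin n → Y,
    pathProb p σ h x n s a *
      (r (s (Fin.last n)) -
        α * ∑ i : Fin n, klDist (σ (h + i) (s i.castSucc)) (μ (h + i) (s i.castSucc)))

lemma Vaux_zero (p : ℕ → X → Y → X → ℝ) (σ μ : ℕ → X → Y → ℝ) (r : X → ℝ) (α : ℝ)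
    (h : ℕ) (x : X) : Vaux p σ μ r α h 0 x = r x := by
  unfold Vaux pathProb
  rw [sum_pi_cons (fun s : Fin 1 → X => ∑ a : Fin 0 → Y,
    ((if s 0 = x then (1:ℝ) else 0) *
      ∏ i : Fin 0, σ (h + i) (s i.castSucc) (a i) * p (h + i) (s i.castSucc) (a i) (s i.succ)) *
      (r (s (Fin.last 0)) - α * ∑ i : Fin 0, klDist (σ (h + i) (s i.castSucc)) (μ (h + i) (s i.castSucc))))]
  simp [Fin.last]

lemma pathProb_total (p : ℕ → X → Y → X → ℝ) (σ : ℕ → X → Y → ℝ)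
    (hp2 : ∀ h x y, ∑ x', p h x y x' = 1) (hσ2 : ∀ h x, ∑ y, σ h x y = 1) :
    ∀ (n h : ℕ) (x : X), ∑ s : Fin (n + 1) → X, ∑ a : Fin n → Y, pathProb p σ h x n s a = 1 := by
  intro n
  induction n with
  | zero =>
    intro h x
    unfold pathProb
    rw [sum_pi_cons (fun s : Fin 1 → X => ∑ a : Fin 0 → Y,
      (if s 0 = x then (1:ℝ) else 0) *
        ∏ i : Fin 0, σ (h + i) (s i.castSucc) (a i) * p (h + i) (s i.castSucc) (a i) (s i.succ))]
    simp
  | succ n ih =>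
    intro h x
    have h1 := exp_step p σ h x n (fun _ _ => (1 : ℝ))
    simp only [mul_one] at h1
    rw [h1]
    simp only [ih (h + 1), mul_one, hp2, hσ2]

/-- Shift a constant out of a path expectation. -/
lemma shift_const (p : ℕ → X → Y → X → ℝ) (σ μ : ℕ → X → Y → ℝ) (r : X → ℝ) (α : ℝ)
    (hp2 : ∀ h x y, ∑ x', p h x y x' = 1) (hσ2 : ∀ h x, ∑ y, σ h x y = 1)
    (h n : ℕ) (x : X) (c : ℝ) :
    (∑ s : Fin (n + 1) → X, ∑ a : Fin n → Y,
      pathProb p σ h x n s a *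
        ((r (s (Fin.last n)) -
          α * ∑ i : Fin n, klDist (σ (h + i) (s i.castSucc)) (μ (h + i) (s i.castSucc))) - c)) =
      Vaux p σ μ r α h n x - c := by
  have expand : (∑ s : Fin (n + 1) → X, ∑ a : Fin n → Y,
      pathProb p σ h x n s a *
        ((r (s (Fin.last n)) -
          α * ∑ i : Fin n, klDist (σ (h + i) (s i.castSucc)) (μ (h + i) (s i.castSucc))) - c)) =
      (∑ s : Fin (n + 1) → X, ∑ a : Fin n → Y,
        pathProb p σ h x n s a *
          (r (s (Fin.last n)) -
            α * ∑ i : Fin n, klDist (σ (h + i) (s i.castSucc)) (μ (h + i) (s i.castSucc)))) -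
      (∑ s : Fin (n + 1) → X, ∑ a : Fin n → Y, pathProb p σ h x n s a) * c := by
    simp only [Finset.sum_mul]
    rw [← Finset.sum_sub_distrib]
    refine Finset.sum_congr rfl fun s _ => ?_
    rw [← Finset.sum_sub_distrib]
    exact Finset.sum_congr rfl fun a _ => mul_sub _ _ _
  rw [expand, pathProb_total p σ hp2 hσ2 n h x, one_mul]
  rfl

lemma Vaux_succ (p : ℕ → X → Y → X → ℝ) (σ μ : ℕ → X → Y → ℝ) (r : X → ℝ) (α : ℝ)
    (hp2 : ∀ h x y, ∑ x', p h x y x' = 1) (hσ2 : ∀ h x, ∑ y, σ h x y = 1)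
    (h n : ℕ) (x : X) :
    Vaux p σ μ r α h (n + 1) x =
      (∑ y, σ h x y * ∑ x', p h x y x' * Vaux p σ μ r α (h + 1) n x') -
        α * klDist (σ h x) (μ h x) := by
  conv_lhs => unfold Vaux
  rw [exp_step p σ h x n (fun s a => r (s (Fin.last (n + 1))) -
    α * ∑ i : Fin (n + 1), klDist (σ (h + i) (s i.castSucc)) (μ (h + i) (s i.castSucc)))]
  have hg : ∀ s' : Fin (n + 1) → X,
      (r ((Fin.cons x s' : Fin (n + 2) → X) (Fin.last (n + 1))) -
        α * ∑ i : Fin (n + 1), klDist (σ (h + i) ((Fin.cons x s' : Fin (n + 2) → X) i.castSucc))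
          (μ (h + i) ((Fin.cons x s' : Fin (n + 2) → X) i.castSucc))) =
      (r (s' (Fin.last n)) -
        α * ∑ i : Fin n, klDist (σ (h + 1 + i) (s' i.castSucc)) (μ (h + 1 + i) (s' i.castSucc))) -
        α * klDist (σ h x) (μ h x) := by
    intro s'
    have e1 : ∀ i : Fin n, (Fin.cons x s' : Fin (n + 2) → X) i.succ.castSucc = s' i.castSucc := by
      intro i; rw [← Fin.succ_castSucc, Fin.cons_succ]
    rw [← Fin.succ_last, Fin.cons_succ, Fin.sum_univ_succ]
    have e2 : ∀ i : Fin n, h + ((i : ℕ) + 1) = h + 1 + (i : ℕ) := fun i => by omega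
    simp only [Fin.castSucc_zero, Fin.cons_zero, Fin.val_zero, Nat.add_zero, e1, Fin.val_succ]
    simp only [e2]
    ring
  simp only [hg]
  simp only [shift_const p σ μ r α hp2 hσ2 (h + 1) n _ (α * klDist (σ h x) (μ h x))]
  have hx' : ∀ y, (∑ x', p h x y x' *
      (Vaux p σ μ r α (h + 1) n x' - α * klDist (σ h x) (μ h x))) =
      (∑ x', p h x y x' * Vaux p σ μ r α (h + 1) n x') - α * klDist (σ h x) (μ h x) := by
    intro y
    simp only [mul_sub]
    rw [Finset.sum_sub_distrib, ← Finset.sum_mul, hp2, one_mul]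
  simp only [hx']
  simp only [mul_sub]
  rw [Finset.sum_sub_distrib, ← Finset.sum_mul, hσ2, one_mul]

lemma Qreg_eq (p : ℕ → X → Y → X → ℝ) (π μ : ℕ → X → Y → ℝ) (r : X → ℝ) (α : ℝ)
    (hp2 : ∀ h x y, ∑ x', p h x y x' = 1) (hπ2 : ∀ h x, ∑ y, π h x y = 1)
    (H h : ℕ) (x : X) (y : Y) :
    Qreg p π μ r α H h x y =
      (∑ x', p h x y x' * Vaux p π μ r α (h + 1) (H - (h + 1)) x') -
        α * klDist (π h x) (μ h x) := by
  unfold Qreg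
  have hterm : ∀ (x' : X) (s : Fin (H - (h + 1) + 1) → X) (a : Fin (H - (h + 1)) → Y),
      pathProb p π (h + 1) x' (H - (h + 1)) s a *
        (r (s (Fin.last (H - (h + 1)))) -
          α * (klDist (π h x) (μ h x) +
            ∑ i : Fin (H - (h + 1)),
              klDist (π (h + 1 + i) (s i.castSucc)) (μ (h + 1 + i) (s i.castSucc)))) =
      pathProb p π (h + 1) x' (H - (h + 1)) s a *
        ((r (s (Fin.last (H - (h + 1)))) -
          α * ∑ i : Fin (H - (h + 1)),
            klDist (π (h + 1 + i) (s i.castSucc)) (μ (h + 1 + i) (s i.castSucc))) -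
          α * klDist (π h x) (μ h x)) := by
    intro x' s a; ring
  simp only [hterm]
  simp only [shift_const p π μ r α hp2 hπ2 (h + 1) (H - (h + 1)) _ (α * klDist (π h x) (μ h x))]
  have hx' : (∑ x', p h x y x' *
      (Vaux p π μ r α (h + 1) (H - (h + 1)) x' - α * klDist (π h x) (μ h x))) =
      (∑ x', p h x y x' * Vaux p π μ r α (h + 1) (H - (h + 1)) x') -
        α * klDist (π h x) (μ h x) := by
    simp only [mul_sub]
    rw [Finset.sum_sub_distrib, ← Finset.sum_mul, hp2, one_mul]
  rw [hx']

noncomputable def Dfun (p : ℕ → X → Y → X → ℝ) (π π' μ : ℕ → X → Y → ℝ) (r : X → ℝ)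
    (α : ℝ) (H h : ℕ) (x : X) : ℝ :=
  (∑ y : Y, (π h x y - π' h x y) * Qreg p π μ r α H h x y) +
    α * klDist (π' h x) (μ h x) - α * klDist (π h x) (μ h x)

lemma diff_aux (p : ℕ → X → Y → X → ℝ) (π π' μ : ℕ → X → Y → ℝ) (r : X → ℝ) (α : ℝ)
    (H : ℕ)
    (hp2 : ∀ h x y, ∑ x', p h x y x' = 1)
    (hπ2 : ∀ h x, ∑ y, π h x y = 1) (hπ'2 : ∀ h x, ∑ y, π' h x y = 1) :
    ∀ (n h : ℕ), h + n = H → ∀ x : X,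
      Vaux p π μ r α h n x - Vaux p π' μ r α h n x =
        ∑ s : Fin (n + 1) → X, ∑ a : Fin n → Y,
          pathProb p π' h x n s a *
            ∑ i : Fin n, Dfun p π π' μ r α H (h + i) (s i.castSucc) := by
  intro n
  induction n with
  | zero =>
    intro h hH x
    rw [Vaux_zero, Vaux_zero]
    simp
  | succ n ih =>
    intro h hH x
    have hQ : ∀ y : Y, Qreg p π μ r α H h x y =
        (∑ x', p h x y x' * Vaux p π μ r α (h + 1) n x') - α * klDist (π h x) (μ h x) := by
      intro y
      rw [Qreg_eq p π μ r α hp2 hπ2 H h x y, show H - (h + 1) = n from by omega]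
    have hIH : ∀ x' : X, Vaux p π μ r α (h + 1) n x' - Vaux p π' μ r α (h + 1) n x' =
        ∑ s' : Fin (n + 1) → X, ∑ a' : Fin n → Y,
          pathProb p π' (h + 1) x' n s' a' *
            ∑ i : Fin n, Dfun p π π' μ r α H (h + 1 + i) (s' i.castSucc) :=
      ih (h + 1) (by omega)
    -- rewrite the RHS using the one-step decomposition
    rw [exp_step p π' h x n
      (fun s a => ∑ i : Fin (n + 1), Dfun p π π' μ r α H (h + i) (s i.castSucc))]
    have hg2 : ∀ s' : Fin (n + 1) → X,
        (∑ i : Fin (n + 1), Dfun p π π' μ r α H (h + i)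
          ((Fin.cons x s' : Fin (n + 2) → X) i.castSucc)) =
        Dfun p π π' μ r α H h x +
          ∑ i : Fin n, Dfun p π π' μ r α H (h + 1 + i) (s' i.castSucc) := by
      intro s'
      have e1 : ∀ i : Fin n, (Fin.cons x s' : Fin (n + 2) → X) i.succ.castSucc = s' i.castSucc := by
        intro i; rw [← Fin.succ_castSucc, Fin.cons_succ]
      have e2 : ∀ i : Fin n, h + ((i : ℕ) + 1) = h + 1 + (i : ℕ) := fun i => by omega
      rw [Fin.sum_univ_succ]
      simp only [Fin.castSucc_zero, Fin.cons_zero, Fin.val_zero, Nat.add_zero, e1, Fin.val_succ]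
      simp only [e2]
    simp only [hg2]
    -- split off the constant Dfun term inside the path expectation
    have inner2 : ∀ x' : X,
        (∑ s' : Fin (n + 1) → X, ∑ a' : Fin n → Y,
          pathProb p π' (h + 1) x' n s' a' *
            (Dfun p π π' μ r α H h x +
              ∑ i : Fin n, Dfun p π π' μ r α H (h + 1 + i) (s' i.castSucc))) =
        Dfun p π π' μ r α H h x +
          (Vaux p π μ r α (h + 1) n x' - Vaux p π' μ r α (h + 1) n x') := by
      intro x'
      rw [hIH x']
      have expand : ∀ (s' : Fin (n + 1) → X) (a' : Fin n → Y),
          pathProb p π' (h + 1) x' n s' a' *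
            (Dfun p π π' μ r α H h x +
              ∑ i : Fin n, Dfun p π π' μ r α H (h + 1 + i) (s' i.castSucc)) =
          pathProb p π' (h + 1) x' n s' a' * Dfun p π π' μ r α H h x +
            pathProb p π' (h + 1) x' n s' a' *
              ∑ i : Fin n, Dfun p π π' μ r α H (h + 1 + i) (s' i.castSucc) :=
        fun s' a' => mul_add _ _ _
      simp only [expand, Finset.sum_add_distrib]
      congr 1
      have : (∑ s' : Fin (n + 1) → X, ∑ a' : Fin n → Y,
          pathProb p π' (h + 1) x' n s' a' * Dfun p π π' μ r α H h x) =
          (∑ s' : Fin (n + 1) → X, ∑ a' : Fin n → Y, pathProb p π' (h + 1) x' n s' a') *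
            Dfun p π π' μ r α H h x := by
        simp only [Finset.sum_mul]
      rw [this, pathProb_total p π' hp2 hπ'2 n (h + 1) x', one_mul]
    simp only [inner2]
    -- Bellman expansions of the two value functions
    rw [Vaux_succ p π μ r α hp2 hπ2 h n x, Vaux_succ p π' μ r α hp2 hπ'2 h n x]
    -- algebra over the action/state sums
    have step_x : ∀ y : Y, (∑ x', p h x y x' *
        (Dfun p π π' μ r α H h x +
          (Vaux p π μ r α (h + 1) n x' - Vaux p π' μ r α (h + 1) n x'))) =
        Dfun p π π' μ r α H h x +
          ((∑ x', p h x y x' * Vaux p π μ r α (h + 1) n x') -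
            (∑ x', p h x y x' * Vaux p π' μ r α (h + 1) n x')) := by
      intro y
      have expand : ∀ x' : X, p h x y x' *
          (Dfun p π π' μ r α H h x +
            (Vaux p π μ r α (h + 1) n x' - Vaux p π' μ r α (h + 1) n x')) =
          p h x y x' * Dfun p π π' μ r α H h x +
            (p h x y x' * Vaux p π μ r α (h + 1) n x' -
              p h x y x' * Vaux p π' μ r α (h + 1) n x') := fun x' => by ring
      simp only [expand, Finset.sum_add_distrib, Finset.sum_sub_distrib]
      rw [← Finset.sum_mul, hp2, one_mul]
    simp only [step_x]
    have step_y : (∑ y : Y, π' h x y *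
        (Dfun p π π' μ r α H h x +
          ((∑ x', p h x y x' * Vaux p π μ r α (h + 1) n x') -
            (∑ x', p h x y x' * Vaux p π' μ r α (h + 1) n x')))) =
        Dfun p π π' μ r α H h x +
          ((∑ y : Y, π' h x y * ∑ x', p h x y x' * Vaux p π μ r α (h + 1) n x') -
            (∑ y : Y, π' h x y * ∑ x', p h x y x' * Vaux p π' μ r α (h + 1) n x')) := by
      have expand : ∀ y : Y, π' h x y *
          (Dfun p π π' μ r α H h x +
            ((∑ x', p h x y x' * Vaux p π μ r α (h + 1) n x') -
              (∑ x', p h x y x' * Vaux p π' μ r α (h + 1) n x'))) =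
          π' h x y * Dfun p π π' μ r α H h x +
            (π' h x y * ∑ x', p h x y x' * Vaux p π μ r α (h + 1) n x' -
              π' h x y * ∑ x', p h x y x' * Vaux p π' μ r α (h + 1) n x') := fun y => by ring
      simp only [expand, Finset.sum_add_distrib, Finset.sum_sub_distrib]
      rw [← Finset.sum_mul, hπ'2, one_mul]
    rw [step_y]
    -- expand Dfun using hQ
    have hD : Dfun p π π' μ r α H h x =
        (∑ y : Y, π h x y * ∑ x', p h x y x' * Vaux p π μ r α (h + 1) n x') -
          (∑ y : Y, π' h x y * ∑ x', p h x y x' * Vaux p π μ r α (h + 1) n x') +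
          α * klDist (π' h x) (μ h x) - α * klDist (π h x) (μ h x) := by
      unfold Dfun
      simp only [hQ]
      have expand : ∀ y : Y, (π h x y - π' h x y) *
          ((∑ x', p h x y x' * Vaux p π μ r α (h + 1) n x') - α * klDist (π h x) (μ h x)) =
          (π h x y * ∑ x', p h x y x' * Vaux p π μ r α (h + 1) n x' -
            π' h x y * ∑ x', p h x y x' * Vaux p π μ r α (h + 1) n x') -
          (π h x y * (α * klDist (π h x) (μ h x)) -
            π' h x y * (α * klDist (π h x) (μ h x))) := fun y => by ring
      simp only [expand, Finset.sum_sub_distrib]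
      rw [← Finset.sum_mul, ← Finset.sum_mul, hπ2, hπ'2]
      ring
    rw [hD]
    ring

/-- **Regularized value difference lemma (Lemma E.4).** For any two policies `π, π'`:
`V_α^{π,t}(x_1) − V_α^{π',t}(x_1)` equals the expectation, over trajectories generated
by `π'` and `p`, of the sum over steps of
`⟨π − π', Q_α^{π,t}⟩[x_h] + α·KL(π'‖μ)[x_h] − α·KL(π‖μ)[x_h]`. -/
theorem regularized_value_difference
    (p : ℕ → X → Y → X → ℝ) (π π' μ : ℕ → X → Y → ℝ) (r : X → ℝ) (α : ℝ)
    (H : ℕ) (x1 : X)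
    (hr : ∀ x, 0 ≤ r x ∧ r x ≤ 1) (hα : 0 < α)
    (hp : (∀ h x y x', 0 ≤ p h x y x') ∧ ∀ h x y, ∑ x', p h x y x' = 1)
    (hπ : (∀ h x y, 0 ≤ π h x y) ∧ ∀ h x, ∑ y, π h x y = 1)
    (hπ' : (∀ h x y, 0 ≤ π' h x y) ∧ ∀ h x, ∑ y, π' h x y = 1) :
    Vreg p π μ r α H 0 x1 - Vreg p π' μ r α H 0 x1 =
      ∑ s : Fin (H - 0 + 1) → X, ∑ a : Fin (H - 0) → Y,
        pathProb p π' 0 x1 (H - 0) s a *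
          ∑ h : Fin (H - 0),
            ((∑ y : Y, (π h (s h.castSucc) y - π' h (s h.castSucc) y) *
                Qreg p π μ r α H h (s h.castSucc) y) +
              α * klDist (π' h (s h.castSucc)) (μ h (s h.castSucc)) -
              α * klDist (π h (s h.castSucc)) (μ h (s h.castSucc))) := by
  have key := diff_aux p π π' μ r α H hp.2 hπ.2 hπ'.2 H 0 (by omega) x1
  have e0 : Vreg p π μ r α H 0 x1 = Vaux p π μ r α 0 H x1 := rfl
  have e0' : Vreg p π' μ r α H 0 x1 = Vaux p π' μ r α 0 H x1 := rfl
  rw [e0, e0', key]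
  show _ = ∑ s : Fin (H + 1) → X, ∑ a : Fin H → Y, _
  refine Finset.sum_congr rfl fun s _ => Finset.sum_congr rfl fun a _ => ?_
  congr 1
  refine Finset.sum_congr rfl fun i _ => ?_
  simp only [Dfun, Nat.zero_add]
end

section
/- Concave-convexlike property of the regularized preference model: for any two policies π_1, π_2 and coefficient c ∈ [0,1], there exists a policy π_c such that for every policy π': c·P_α(π_1, π') + (1−c)·P_α(π_2, π') ≤ P_α(π_c, π'), where P_α(π,π') = P(π ≻ π') − α KL_p(π||μ) + α KL_p(π'||μ). -/
open Finset

variable {X Y : Type} [Fintype X] [Fintype Y] [DecidableEq X]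

/-- Preference between policies: expectation of the final-state preference. -/
noncomputable def prefPol (Pref : X → X → ℝ) (p : ℕ → X → Y → X → ℝ)
    (π π' : ℕ → X → Y → ℝ) (x1 : X) (H : ℕ) : ℝ :=
  ∑ x : X, ∑ x' : X, reach p π x1 H x * reach p π' x1 H x' * Pref x x'

/-- Trajectory KL divergence, written via reach probabilities as the reach-weighted
sum of the per-state KL divergences. -/
noncomputable def KLreach (p : ℕ → X → Y → X → ℝ) (π μ : ℕ → X → Y → ℝ)
    (x1 : X) (H : ℕ) : ℝ :=
  ∑ h : Fin H, ∑ x : X, reach p π x1 h x * klDist (π h x) (μ h x)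

/-- A valid (Markov, time-dependent) policy. -/
def IsPolicy (π : ℕ → X → Y → ℝ) : Prop :=
  (∀ h x y, 0 ≤ π h x y) ∧ ∀ h x, ∑ y, π h x y = 1

/-- Scalar convexity of `t ↦ t * log (t / q)` on the nonnegatives, stated pointwise. -/
lemma mul_log_div_convex_pt (q t x y : ℝ) (hx : 0 ≤ x) (hy : 0 ≤ y)
    (ht : 0 ≤ t) (ht' : t ≤ 1) :
    (t * x + (1 - t) * y) * Real.log ((t * x + (1 - t) * y) / q) ≤
      t * (x * Real.log (x / q)) + (1 - t) * (y * Real.log (y / q)) := by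
  by_cases hq : q = 0
  · simp [hq]
  have key : ∀ s : ℝ, 0 ≤ s → s * Real.log (s / q) = s * Real.log s - s * Real.log q := by
    intro s hs
    rcases eq_or_lt_of_le hs with h | h
    · simp [← h]
    · rw [Real.log_div h.ne' hq, mul_sub]
  have hz : 0 ≤ t * x + (1 - t) * y := by nlinarith
  rw [key _ hz, key _ hx, key _ hy]
  have hconv := Real.convexOn_mul_log.2 (Set.mem_Ici.2 hx) (Set.mem_Ici.2 hy)
    ht (by linarith : (0:ℝ) ≤ 1 - t) (by ring)
  simp only [smul_eq_mul] at hconv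
  nlinarith [hconv]

/-- Convexity of the per-state KL divergence in its first argument. -/
lemma klDist_convex {Y : Type} [Fintype Y] (p1 p2 q : Y → ℝ)
    (hp1 : ∀ y, 0 ≤ p1 y) (hp2 : ∀ y, 0 ≤ p2 y) (t : ℝ) (ht : 0 ≤ t) (ht' : t ≤ 1) :
    klDist (fun y => t * p1 y + (1 - t) * p2 y) q ≤
      t * klDist p1 q + (1 - t) * klDist p2 q := by
  simp only [klDist, Finset.mul_sum, ← Finset.sum_add_distrib]
  exact Finset.sum_le_sum fun y _ =>
    mul_log_div_convex_pt (q y) t (p1 y) (p2 y) (hp1 y) (hp2 y) ht ht'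

/-- **Concave-convexlike property of the regularized preference model (Lemma A.3).**
For any two policies `π₁, π₂` and `c ∈ [0,1]` there exists a policy `π_c` such that
for every policy `π'`:
`c·P_α(π₁,π') + (1−c)·P_α(π₂,π') ≤ P_α(π_c,π')`, where
`P_α(π,π') = P(π≻π') − α·KL_p(π‖μ) + α·KL_p(π'‖μ)`. -/
theorem regularized_preference_concave_convexlike
    (Pref : X → X → ℝ) (p : ℕ → X → Y → X → ℝ) (μ π₁ π₂ : ℕ → X → Y → ℝ)
    (x1 : X) (H : ℕ) (α : ℝ) (hα : 0 < α)
    (c : ℝ) (hc : 0 ≤ c) (hc' : c ≤ 1)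
    (hp : (∀ h x y x', 0 ≤ p h x y x') ∧ ∀ h x y, ∑ x', p h x y x' = 1)
    (hπ₁ : IsPolicy π₁) (hπ₂ : IsPolicy π₂) :
    ∃ πc : ℕ → X → Y → ℝ, IsPolicy πc ∧
      ∀ π' : ℕ → X → Y → ℝ, IsPolicy π' →
        c * (prefPol Pref p π₁ π' x1 H - α * KLreach p π₁ μ x1 H +
              α * KLreach p π' μ x1 H) +
          (1 - c) * (prefPol Pref p π₂ π' x1 H - α * KLreach p π₂ μ x1 H +
              α * KLreach p π' μ x1 H) ≤
        prefPol Pref p πc π' x1 H - α * KLreach p πc μ x1 H +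
          α * KLreach p π' μ x1 H := by
  classical
  have hr1 := reach_nonneg p π₁ x1 hp.1 hπ₁.1
  have hr2 := reach_nonneg p π₂ x1 hp.1 hπ₂.1
  have ha : ∀ h x, 0 ≤ c * reach p π₁ x1 h x := fun h x => mul_nonneg hc (hr1 h x)
  have hb : ∀ h x, 0 ≤ (1 - c) * reach p π₂ x1 h x :=
    fun h x => mul_nonneg (by linarith) (hr2 h x)
  set πc : ℕ → X → Y → ℝ := fun h x y =>
    if c * reach p π₁ x1 h x + (1 - c) * reach p π₂ x1 h x = 0 then π₁ h x y
    else (c * reach p π₁ x1 h x * π₁ h x y +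
          (1 - c) * reach p π₂ x1 h x * π₂ h x y) /
         (c * reach p π₁ x1 h x + (1 - c) * reach p π₂ x1 h x) with hπc
  -- reach of πc is the convex combination of the reaches
  have hmix : ∀ h x, reach p πc x1 h x =
      c * reach p π₁ x1 h x + (1 - c) * reach p π₂ x1 h x := by
    intro h
    induction h with
    | zero => intro x; simp only [reach]; split <;> ring
    | succ n ih =>
      intro x'
      simp only [reach]
      rw [Finset.mul_sum, Finset.mul_sum, ← Finset.sum_add_distrib]
      refine Finset.sum_congr rfl fun x _ => ?_
      rw [Finset.mul_sum, Finset.mul_sum, ← Finset.sum_add_distrib]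
      refine Finset.sum_congr rfl fun y _ => ?_
      rw [ih]
      by_cases h0 : c * reach p π₁ x1 n x + (1 - c) * reach p π₂ x1 n x = 0
      · have hz1 : c * reach p π₁ x1 n x = 0 := by
          have := ha n x; have := hb n x; linarith
        have hz2 : (1 - c) * reach p π₂ x1 n x = 0 := by
          have := ha n x; have := hb n x; linarith
        show _ * (πc n x y * p n x y x') = _
        rw [hπc]
        simp only [if_pos h0]
        rw [h0, zero_mul]
        linear_combination (-(π₁ n x y * p n x y x')) * hz1 +
          (-(π₂ n x y * p n x y x')) * hz2
      · show _ * (πc n x y * p n x y x') = _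
        rw [hπc]
        simp only [if_neg h0]
        field_simp
  have hIsPol : IsPolicy πc := by
    constructor
    · intro h x y
      rw [hπc]
      simp only
      split
      · exact hπ₁.1 h x y
      · refine div_nonneg ?_ (by have := ha h x; have := hb h x; linarith)
        exact add_nonneg (mul_nonneg (ha h x) (hπ₁.1 h x y))
          (mul_nonneg (hb h x) (hπ₂.1 h x y))
    · intro h x
      rw [hπc]
      simp only
      by_cases h0 : c * reach p π₁ x1 h x + (1 - c) * reach p π₂ x1 h x = 0
      · simp only [if_pos h0]; exact hπ₁.2 h x
      · simp only [if_neg h0]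
        rw [← Finset.sum_div, Finset.sum_add_distrib, ← Finset.mul_sum, ← Finset.mul_sum,
          hπ₁.2, hπ₂.2, mul_one, mul_one, div_self h0]
  refine ⟨πc, hIsPol, fun π' hπ' => ?_⟩
  -- preference is linear in the reach of the first argument
  have hpref : prefPol Pref p πc π' x1 H =
      c * prefPol Pref p π₁ π' x1 H + (1 - c) * prefPol Pref p π₂ π' x1 H := by
    simp only [prefPol]
    rw [Finset.mul_sum, Finset.mul_sum, ← Finset.sum_add_distrib]
    refine Finset.sum_congr rfl fun x _ => ?_
    rw [Finset.mul_sum, Finset.mul_sum, ← Finset.sum_add_distrib]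
    refine Finset.sum_congr rfl fun x' _ => ?_
    rw [hmix]
    ring
  -- KL term is convex
  have hKL : KLreach p πc μ x1 H ≤
      c * KLreach p π₁ μ x1 H + (1 - c) * KLreach p π₂ μ x1 H := by
    simp only [KLreach]
    rw [Finset.mul_sum, Finset.mul_sum, ← Finset.sum_add_distrib]
    refine Finset.sum_le_sum fun h _ => ?_
    rw [Finset.mul_sum, Finset.mul_sum, ← Finset.sum_add_distrib]
    refine Finset.sum_le_sum fun x _ => ?_
    rw [hmix]
    by_cases h0 : c * reach p π₁ x1 h x + (1 - c) * reach p π₂ x1 h x = 0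
    · have hz1 : c * reach p π₁ x1 h x = 0 := by
        have := ha h x; have := hb h x; linarith
      have hz2 : (1 - c) * reach p π₂ x1 h x = 0 := by
        have := ha h x; have := hb h x; linarith
      rw [h0, zero_mul, ← mul_assoc, ← mul_assoc, hz1, hz2, zero_mul, zero_mul, add_zero]
    · have hD : 0 < c * reach p π₁ x1 h x + (1 - c) * reach p π₂ x1 h x :=
        lt_of_le_of_ne (by have := ha h x; have := hb h x; linarith) (Ne.symm h0)
      set D := c * reach p π₁ x1 h x + (1 - c) * reach p π₂ x1 h x with hDdef
      set t := c * reach p π₁ x1 h x / D with htdef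
      have ht : 0 ≤ t := div_nonneg (ha h x) hD.le
      have ht' : t ≤ 1 := by
        rw [htdef, div_le_one hD]
        have := hb h x; linarith
      have hfun : πc h x = fun y => t * π₁ h x y + (1 - t) * π₂ h x y := by
        funext y
        rw [hπc]
        simp only [if_neg h0]
        rw [htdef, hDdef]
        have h0' : c * reach p π₁ x1 h x + (1 - c) * reach p π₂ x1 h x ≠ 0 := h0
        rw [if_neg h0']
        field_simp
        ring
      have hconv := klDist_convex (π₁ h x) (π₂ h x) (μ h x)
        (hπ₁.1 h x) (hπ₂.1 h x) t ht ht'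
      rw [← hfun] at hconv
      calc D * klDist (πc h x) (μ h x)
          ≤ D * (t * klDist (π₁ h x) (μ h x) + (1 - t) * klDist (π₂ h x) (μ h x)) :=
            mul_le_mul_of_nonneg_left hconv hD.le
        _ = c * (reach p π₁ x1 h x * klDist (π₁ h x) (μ h x)) +
            (1 - c) * (reach p π₂ x1 h x * klDist (π₂ h x) (μ h x)) := by
            rw [htdef, hDdef]
            have h0' : c * reach p π₁ x1 h x + (1 - c) * reach p π₂ x1 h x ≠ 0 := h0
            field_simp
            ring
  have h1 : α * KLreach p πc μ x1 H ≤
      α * (c * KLreach p π₁ μ x1 H + (1 - c) * KLreach p π₂ μ x1 H) :=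
    mul_le_mul_of_nonneg_left hKL hα.le
  nlinarith [h1, hpref]
end

section
/- The Nash equilibrium is close to the reference policy: if π*_α is a Nash equilibrium of the regularized preference model P_α (so that P_α(π*_α, π') ≥ P_α(π*_α, π*_α) = 1/2 for all π', in particular for π' = μ), then KL_p(π*_α || μ) ≤ 1/(2α). -/
/-- **The Nash equilibrium is close to the reference policy (Lemma B.5).**
In the regularized preference model `P_α(π,π') = P(π≻π') − α·KL(π) + α·KL(π')`
(KL taken w.r.t. the reference policy `μ`, so `KL(μ) = 0`), if `π*` is a Nash
(max-min optimal) policy, so that `P_α(π*,π') ≥ P_α(π*,π*) = 1/2` for all `π'`,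
then `KL(π*‖μ) ≤ 1/(2α)`. -/
theorem nash_close_to_reference
    {Pol : Type} (pref : Pol → Pol → ℝ) (KL : Pol → ℝ) (μ πstar : Pol) (α : ℝ)
    (hα : 0 < α)
    (hrange : ∀ π π', 0 ≤ pref π π' ∧ pref π π' ≤ 1)
    (hKLnonneg : ∀ π, 0 ≤ KL π)
    (hKLμ : KL μ = 0)
    (hdiag : pref πstar πstar = 1 / 2)
    (hnash : ∀ π' : Pol,
      pref πstar πstar - α * KL πstar + α * KL πstar ≤
        pref πstar π' - α * KL πstar + α * KL π') :
    KL πstar ≤ 1 / (2 * α) := by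
  have h := hnash μ
  have h1 := (hrange πstar μ).2
  rw [hdiag, hKLμ] at h
  rw [le_div_iff₀ (by positivity)]
  nlinarith
end

section
/- One-step mirror descent KL inequality: let π⁻ ∈ Δ(Y) be a probability distribution on a finite set Y, δ : Y → ℝ a bounded function, and define π⁺(y) = π⁻(y) e^{δ(y)} / Σ_{y'} π⁻(y') e^{δ(y')}. Then for any π ∈ Δ(Y) absolutely continuous with respect to π⁻: KL(π||π⁺) ≤ KL(π||π⁻) + ⟨π⁻ − π, δ⟩ + 2‖δ‖_∞². -/
open Finset

lemma exp_le_one_add_add_sq {x : ℝ} (hx : |x| ≤ 1) : Real.exp x ≤ 1 + x + x ^ 2 := by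
  have h := Real.exp_bound hx (n := 2) (by norm_num)
  simp [Finset.sum_range_succ] at h
  have := abs_le.1 h
  nlinarith [sq_nonneg x, sq_abs x]

/-- **One-step mirror descent KL inequality (Lemma 2 of Munos et al.).** For
`π⁺(y) = π⁻(y) e^{δ(y)} / Z` and any `π` absolutely continuous w.r.t. `π⁻`:
`KL(π‖π⁺) ≤ KL(π‖π⁻) + ⟨π⁻ − π, δ⟩ + 2‖δ‖_∞²`. -/
theorem one_step_md_kl_inequality
    {Y : Type} [Fintype Y] [Nonempty Y]
    (πm πp π : Y → ℝ) (δ : Y → ℝ)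
    (hπm : (∀ y, 0 ≤ πm y) ∧ ∑ y, πm y = 1)
    (hπ : (∀ y, 0 ≤ π y) ∧ ∑ y, π y = 1)
    (habs : ∀ y, πm y = 0 → π y = 0)
    (hπp : ∀ y, πp y = πm y * Real.exp (δ y) / ∑ y', πm y' * Real.exp (δ y')) :
    klDist π πp ≤
      klDist π πm + (∑ y, (πm y - π y) * δ y) + 2 * (⨆ y, |δ y|) ^ 2 := by
  obtain ⟨hπm0, hπm1⟩ := hπm
  obtain ⟨hπ0, hπ1⟩ := hπ
  set D : ℝ := ⨆ y, |δ y| with hDdef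
  have hD : ∀ y, |δ y| ≤ D := fun y =>
    le_ciSup (f := fun y => |δ y|) (Set.Finite.bddAbove (Set.finite_range _)) y
  have hD0 : 0 ≤ D := le_trans (abs_nonneg _) (hD (Classical.arbitrary Y))
  set Z : ℝ := ∑ y', πm y' * Real.exp (δ y') with hZdef
  have hZpos : 0 < Z := by
    obtain ⟨y, hy⟩ : ∃ y, 0 < πm y := by
      by_contra h
      push_neg at h
      have : ∀ y, πm y = 0 := fun y => le_antisymm (h y) (hπm0 y)
      simp [this] at hπm1
    refine Finset.sum_pos' (fun i _ => mul_nonneg (hπm0 i) (Real.exp_pos _).le) ?_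
    exact ⟨y, Finset.mem_univ y, mul_pos hy (Real.exp_pos _)⟩
  -- termwise identity
  have hterm : ∀ y, π y * Real.log (π y / πp y)
      = π y * Real.log (π y / πm y) + π y * (Real.log Z - δ y) := by
    intro y
    rcases eq_or_lt_of_le (hπ0 y) with h0 | hpos
    · simp [← h0]
    · have hmpos : 0 < πm y := by
        rcases eq_or_lt_of_le (hπm0 y) with h | h
        · exact absurd (habs y h.symm) (ne_of_gt hpos)
        · exact h
      have hppos : πp y = πm y * Real.exp (δ y) / Z := hπp y
      rw [hppos]
      rw [div_div_eq_mul_div, Real.log_div (by positivity) (by positivity),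
        Real.log_mul (by positivity) (by positivity),
        Real.log_mul (ne_of_gt hmpos) (Real.exp_ne_zero _), Real.log_exp,
        Real.log_div (ne_of_gt hpos) (ne_of_gt hmpos)]
      ring
  have hexpand : klDist π πp = klDist π πm + Real.log Z - ∑ y, π y * δ y := by
    unfold klDist
    rw [Finset.sum_congr rfl (fun y _ => hterm y), Finset.sum_add_distrib]
    have : ∑ y, π y * (Real.log Z - δ y)
        = (∑ y, π y) * Real.log Z - ∑ y, π y * δ y := by
      rw [Finset.sum_mul, ← Finset.sum_sub_distrib]
      congr 1; ext y; ring
    rw [this, hπ1]; ring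
  -- key bound : log Z ≤ ∑ πm δ + 2 D^2
  have hkey : Real.log Z ≤ (∑ y, πm y * δ y) + 2 * D ^ 2 := by
    rcases le_or_gt D 1 with hD1 | hD1
    · -- Z ≤ 1 + m + D^2
      have hZle : Z ≤ 1 + (∑ y, πm y * δ y) + D ^ 2 := by
        have : Z ≤ ∑ y, πm y * (1 + δ y + D ^ 2) := by
          apply Finset.sum_le_sum
          intro y _
          apply mul_le_mul_of_nonneg_left _ (hπm0 y)
          calc Real.exp (δ y) ≤ 1 + δ y + (δ y) ^ 2 :=
                exp_le_one_add_add_sq ((hD y).trans hD1)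
            _ ≤ 1 + δ y + D ^ 2 := by
                have := sq_abs (δ y) ▸ pow_le_pow_left₀ (abs_nonneg _) (hD y) 2
                linarith [(sq_abs (δ y)).symm ▸ this]
        calc Z ≤ ∑ y, πm y * (1 + δ y + D ^ 2) := this
          _ = 1 + (∑ y, πm y * δ y) + D ^ 2 := by
              simp only [mul_add, mul_one, Finset.sum_add_distrib, ← Finset.sum_mul,
                hπm1, one_mul]
      have hlog := Real.log_le_sub_one_of_pos hZpos
      nlinarith [sq_nonneg D]
    · -- D > 1 : log Z ≤ D and m ≥ -D
      have hZle : Z ≤ Real.exp D := by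
        calc Z ≤ ∑ y, πm y * Real.exp D := by
              apply Finset.sum_le_sum
              intro y _
              exact mul_le_mul_of_nonneg_left
                (Real.exp_le_exp.2 ((le_abs_self _).trans (hD y))) (hπm0 y)
          _ = Real.exp D := by rw [← Finset.sum_mul, hπm1, one_mul]
      have hlogZ : Real.log Z ≤ D := by
        calc Real.log Z ≤ Real.log (Real.exp D) :=
              Real.log_le_log hZpos hZle
          _ = D := Real.log_exp D
      have hm : -D ≤ ∑ y, πm y * δ y := by
        calc -D = ∑ y, πm y * (-D) := by rw [← Finset.sum_mul, hπm1, one_mul]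
          _ ≤ ∑ y, πm y * δ y := by
              apply Finset.sum_le_sum
              intro y _
              exact mul_le_mul_of_nonneg_left (neg_le_of_abs_le (hD y)) (hπm0 y)
      nlinarith
  have hsplit : ∑ y, (πm y - π y) * δ y = (∑ y, πm y * δ y) - ∑ y, π y * δ y := by
    rw [← Finset.sum_sub_distrib]; congr 1; ext y; ring
  rw [hexpand, hsplit]
  linarith
end

section
/- Lower bound on the log-likelihood ratio along mirror descent iterates: consider the scalar recursion on L_t(y|x) = log(π_t(y|x)/μ(y|x)) induced by the MD update π_{t+1}(y|x) ∝ μ(y|x)^{αη_t} π_t(y|x)^{1−αη_t} e^{η_t Q_t(x,y)} with π_1 = μ, step sizes η_t = 2/(α(t+2)), and Q-values satisfying α H log μ_min ≤ Q_t(x,y) ≤ 1 and log-partition bound log Σ_{y'} π_t(y'|x) e^{η_t(Q_t(x,y') − α L_t(y'|x))} ≤ η_t. Then for all t and all (x,y) in the support: H log μ_min − 1/α ≤ L_t(y|x) ≤ log(1/μ_min). -/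
open Finset

/-- **Bounds on the log-likelihood ratio along mirror descent iterates (Lemma E.9).**
For the MD update `π_{t+1}(y|x) ∝ μ(y|x)^{αη_t} π_t(y|x)^{1−αη_t} e^{η_t Q_t(x,y)}`
with `π_1 = μ`, step sizes `η_t = 2/(α(t+2))`, Q-values satisfying
`α H log μ_min ≤ Q_t(x,y) ≤ 1`, and the log-partition bound, the log-likelihood
ratio `L_t(y|x) = log(π_t(y|x)/μ(y|x))` satisfies
`H log μ_min − 1/α ≤ L_t(y|x) ≤ log(1/μ_min)` on the support of `μ`. -/
theorem log_likelihood_ratio_bounds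
    {X Y : Type} [Fintype X] [Fintype Y]
    (π : ℕ → X → Y → ℝ) (μ : X → Y → ℝ) (Q : ℕ → X → Y → ℝ)
    (α μmin : ℝ) (H : ℕ) (η : ℕ → ℝ)
    (hα : 0 < α) (hH : 1 ≤ H)
    (hη : ∀ t, η t = 2 / (α * (t + 2)))
    (hμ : (∀ x y, 0 ≤ μ x y) ∧ ∀ x, ∑ y, μ x y = 1)
    (hμmin : 0 < μmin ∧ μmin ≤ 1)
    (hmin : ∀ x y, 0 < μ x y → μmin ≤ μ x y)
    (hdist : ∀ t x, (∀ y, 0 ≤ π t x y) ∧ ∑ y, π t x y = 1)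
    (hinit : ∀ x y, π 1 x y = μ x y)
    (hQ : ∀ t x y, α * H * Real.log μmin ≤ Q t x y ∧ Q t x y ≤ 1)
    (hupdate : ∀ t x y, 1 ≤ t → 0 < μ x y →
      π (t + 1) x y =
        μ x y ^ (α * η t) * π t x y ^ (1 - α * η t) * Real.exp (η t * Q t x y) /
          ∑ y', μ x y' ^ (α * η t) * π t x y' ^ (1 - α * η t) *
            Real.exp (η t * Q t x y'))
    (hpartition : ∀ t x, 1 ≤ t →
      Real.log (∑ y', π t x y' *
          Real.exp (η t * (Q t x y' - α * Real.log (π t x y' / μ x y')))) ≤ η t) :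
    ∀ t, 1 ≤ t → ∀ x y, 0 < μ x y →
      (H : ℝ) * Real.log μmin - 1 / α ≤ Real.log (π t x y / μ x y) ∧
        Real.log (π t x y / μ x y) ≤ Real.log (1 / μmin) := by

  obtain ⟨hμ0, hμ1⟩ := hμ
  obtain ⟨hm0, hm1⟩ := hμmin
  have hc0 : (H : ℝ) * Real.log μmin - 1 / α ≤ 0 := by
    have hlm : Real.log μmin ≤ 0 := Real.log_nonpos hm0.le hm1
    have hH1 : (1 : ℝ) ≤ (H : ℝ) := by exact_mod_cast hH
    have h1α : 0 < 1 / α := by positivity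
    nlinarith
  have key : ∀ t, 1 ≤ t → ∀ x y, 0 < μ x y →
      0 < π t x y ∧ (H : ℝ) * Real.log μmin - 1 / α ≤ Real.log (π t x y / μ x y) := by
    intro t
    induction t with
    | zero => intro h; omega
    | succ n ih =>
      intro _ x y hxy
      rcases Nat.lt_or_ge n 1 with hn | hn
      · -- base case: n = 0
        interval_cases n
        rw [hinit x y]
        refine ⟨hxy, ?_⟩
        rw [div_self hxy.ne', Real.log_one]
        exact hc0
      · -- inductive step
        have hIH := ih hn
        have hηpos : 0 < η n := by
          rw [hη n]
          positivity
        have haη : α * η n = 2 / ((n : ℝ) + 2) := by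
          rw [hη n]
          field_simp
        have haηpos : 0 < α * η n := by
          rw [haη]; positivity
        have haηle : α * η n ≤ 2 / 3 := by
          rw [haη]
          have hn' : (1 : ℝ) ≤ (n : ℝ) := by exact_mod_cast hn
          rw [div_le_div_iff₀ (by linarith) (by norm_num)]
          linarith
        have h1a : 0 ≤ 1 - α * η n := by linarith
        have hπn := hIH x y hxy
        -- term-wise comparison of partition functions
        have hterm : ∀ y', 0 < μ x y' →
            μ x y' ^ (α * η n) * π n x y' ^ (1 - α * η n) * Real.exp (η n * Q n x y')
              = π n x y' * Real.exp (η n * (Q n x y' - α * Real.log (π n x y' / μ x y'))) := by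
          intro y' hμ'
          have hπ' : 0 < π n x y' := (hIH x y' hμ').1
          have h1 : μ x y' ^ (α * η n) * π n x y' ^ (1 - α * η n) * Real.exp (η n * Q n x y')
              = Real.exp (Real.log (μ x y') * (α * η n) + Real.log (π n x y') * (1 - α * η n)
                  + η n * Q n x y') := by
            rw [Real.rpow_def_of_pos hμ', Real.rpow_def_of_pos hπ', ← Real.exp_add, ← Real.exp_add]
          have h2 : π n x y' * Real.exp (η n * (Q n x y' - α * Real.log (π n x y' / μ x y')))
              = Real.exp (Real.log (π n x y')
                  + η n * (Q n x y' - α * Real.log (π n x y' / μ x y'))) := by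
            rw [Real.exp_add, Real.exp_log hπ']
          rw [h1, h2, Real.exp_eq_exp, Real.log_div hπ'.ne' hμ'.ne']
          ring
        -- positivity of the normalizer
        have hZpos : 0 < ∑ y', μ x y' ^ (α * η n) * π n x y' ^ (1 - α * η n) *
            Real.exp (η n * Q n x y') := by
          apply Finset.sum_pos'
          · intro i _
            have := hμ0 x i
            have := (hdist n x).1 i
            positivity
          · refine ⟨y, Finset.mem_univ y, ?_⟩
            have hπ' : 0 < π n x y := hπn.1
            positivity
        -- normalizer is bounded by the partition sum
        have hZle : (∑ y', μ x y' ^ (α * η n) * π n x y' ^ (1 - α * η n) *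
              Real.exp (η n * Q n x y'))
            ≤ ∑ y', π n x y' *
              Real.exp (η n * (Q n x y' - α * Real.log (π n x y' / μ x y'))) := by
          apply Finset.sum_le_sum
          intro i _
          rcases (hμ0 x i).eq_or_lt with h0 | hpos
          · rw [← h0, Real.zero_rpow haηpos.ne', zero_mul, zero_mul]
            have := (hdist n x).1 i
            positivity
          · exact le_of_eq (hterm i hpos)
        have hlogZ : Real.log (∑ y', μ x y' ^ (α * η n) * π n x y' ^ (1 - α * η n) *
            Real.exp (η n * Q n x y')) ≤ η n :=
          le_trans (Real.log_le_log hZpos hZle) (hpartition n x hn)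
        -- the updated policy value
        have hupd := hupdate n x y hn hxy
        have hnumpos : 0 < μ x y ^ (α * η n) * π n x y ^ (1 - α * η n) *
            Real.exp (η n * Q n x y) := by
          have hπ' : 0 < π n x y := hπn.1
          positivity
        have hπpos : 0 < π (n + 1) x y := by
          rw [hupd]; exact div_pos hnumpos hZpos
        refine ⟨hπpos, ?_⟩
        have hπ' : 0 < π n x y := hπn.1
        have hlog : Real.log (π (n + 1) x y / μ x y)
            = Real.log (μ x y) * (α * η n) + Real.log (π n x y) * (1 - α * η n)
              + η n * Q n x y
              - Real.log (∑ y', μ x y' ^ (α * η n) * π n x y' ^ (1 - α * η n) *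
                  Real.exp (η n * Q n x y'))
              - Real.log (μ x y) := by
          rw [hupd, div_div, Real.log_div hnumpos.ne' (by positivity),
            Real.log_mul (by positivity) (Real.exp_ne_zero _),
            Real.log_mul (by positivity) (by positivity),
            Real.log_mul hZpos.ne' hxy.ne',
            Real.log_rpow hxy, Real.log_rpow hπ', Real.log_exp]
          ring
        rw [hlog]
        have hLn : (H : ℝ) * Real.log μmin - 1 / α
            ≤ Real.log (π n x y) - Real.log (μ x y) := by
          have := hπn.2
          rwa [Real.log_div hπ'.ne' hxy.ne'] at this
        have hQn := (hQ n x y).1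
        have hQη : η n * (α * (H : ℝ) * Real.log μmin) ≤ η n * Q n x y :=
          mul_le_mul_of_nonneg_left hQn hηpos.le
        have hmono : (1 - α * η n) * ((H : ℝ) * Real.log μmin - 1 / α)
            ≤ (1 - α * η n) * (Real.log (π n x y) - Real.log (μ x y)) :=
          mul_le_mul_of_nonneg_left hLn h1a
        have hainv : α * (1 / α) = 1 := mul_one_div_cancel hα.ne'
        nlinarith [hlogZ, hQη, hmono, hainv]
  intro t ht x y hxy
  obtain ⟨hπpos, hlow⟩ := key t ht x y hxy
  refine ⟨hlow, ?_⟩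
  have hπle : π t x y ≤ 1 := by
    have := Finset.single_le_sum (fun i _ => (hdist t x).1 i) (Finset.mem_univ y)
    rw [(hdist t x).2] at this
    exact this
  have hdivle : π t x y / μ x y ≤ 1 / μmin :=
    div_le_div₀ zero_le_one hπle hm0 (hmin x y hxy)
  exact Real.log_le_log (div_pos hπpos hxy) hdivle
end
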